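/- Let u^1,...,u^L satisfy the gradient flow of a deep diagonal linear network, and for component i let l uniquely attain min_k |u^k_i(0)|. Then for every layer j ≠ l and every t ≥ 0, u^j_i(t) = sign(u^j_i(0)) · sqrt(u^l_i(t)^2 + u^j_i(0)^2 - u^l_i(0)^2). In particular, each non-minimal layer's trajectory is determined by the trajectory of the minimal layer and the initialization. -/

import Mathlib

open Finset

/-- The gradient of `f : ℝ^d → ℝ`, given componentwise by the partial derivatives. -/
noncomputable def grad {d : ℕ} (f : (Fin d → ℝ) → ℝ) (x : Fin d → ℝ) (i : Fin d) : ℝ :=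
  fderiv ℝ f x (Pi.single i 1)

theorem stmt_4 {L d : ℕ} (u : Fin L → ℝ → Fin d → ℝ) (Loss : (Fin d → ℝ) → ℝ)
    (hLoss : ContDiff ℝ 1 Loss)
    (θ : ℝ → Fin d → ℝ) (hθ : ∀ t i, θ t i = ∏ j, u j t i)
    (hflow : ∀ j, ∀ t ≥ (0:ℝ), ∀ i,
      HasDerivAt (fun s => u j s i)
        (-((∏ k ∈ Finset.univ.erase j, u k t i) * grad Loss (θ t) i)) t)
    (i : Fin d) (l : Fin L) (hl : ∀ k : Fin L, k ≠ l → |u l 0 i| < |u k 0 i|) :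
    ∀ j : Fin L, j ≠ l → ∀ t ≥ (0:ℝ),
      u j t i = Real.sign (u j 0 i) *
        Real.sqrt (u l t i ^ 2 + u j 0 i ^ 2 - u l 0 i ^ 2) := by
  intro j hj t ht
  set F : ℝ → ℝ := fun s => (u j s i) ^ 2 - (u l s i) ^ 2 with hF
  have hderiv : ∀ s, 0 ≤ s → HasDerivAt F 0 s := by
    intro s hs
    have hj' := hflow j s hs i
    have hl' := hflow l s hs i
    have h := (hj'.pow 2).sub (hl'.pow 2)
    refine h.congr_deriv (Eq.symm ?_)
    have e1 : u j s i * ∏ k ∈ Finset.univ.erase j, u k s i = ∏ k, u k s i :=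
      Finset.mul_prod_erase _ (fun k => u k s i) (Finset.mem_univ j)
    have e2 : u l s i * ∏ k ∈ Finset.univ.erase l, u k s i = ∏ k, u k s i :=
      Finset.mul_prod_erase _ (fun k => u k s i) (Finset.mem_univ l)
    push_cast
    linear_combination (2 * grad Loss (θ s) i) * e1 - (2 * grad Loss (θ s) i) * e2
  have hcont : ContinuousOn F (Set.Icc 0 t) := fun s hs =>
    (hderiv s hs.1).continuousAt.continuousWithinAt
  have hconst : ∀ s ∈ Set.Icc (0:ℝ) t, F s = F 0 :=
    constant_of_has_deriv_right_zero hcont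
      (fun x hx => (hderiv x hx.1).hasDerivWithinAt)
  have hlt : (u l 0 i) ^ 2 < (u j 0 i) ^ 2 := by
    have h := hl j hj
    have := pow_lt_pow_left₀ h (abs_nonneg _) (two_ne_zero)
    simpa [sq_abs] using this
  have hne : ∀ s ∈ Set.Icc (0:ℝ) t, u j s i ≠ 0 := by
    intro s hs h0'
    have hc := hconst s hs
    simp only [hF, h0'] at hc
    nlinarith [sq_nonneg (u l s i)]
  have hct : ContinuousOn (fun s => u j s i) (Set.Icc 0 t) := fun s hs =>
    (hflow j s hs.1 i).continuousAt.continuousWithinAt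
  have hsq : u l t i ^ 2 + u j 0 i ^ 2 - u l 0 i ^ 2 = u j t i ^ 2 := by
    have := hconst t ⟨ht, le_refl t⟩
    simp only [hF] at this
    linarith
  rw [hsq]
  have h0ne : u j 0 i ≠ 0 := hne 0 ⟨le_refl 0, ht⟩
  rcases h0ne.lt_or_gt with hneg | hpos
  · have htneg : u j t i < 0 := by
      rcases (hne t ⟨ht, le_refl t⟩).lt_or_gt with h | h
      · exact h
      · exfalso
        have : (0:ℝ) ∈ Set.Icc (u j 0 i) (u j t i) := ⟨hneg.le, h.le⟩
        obtain ⟨s, hs, hs0⟩ := intermediate_value_Icc ht hct this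
        exact hne s hs hs0
    rw [Real.sqrt_sq_eq_abs, abs_of_neg htneg, Real.sign_of_neg hneg]
    ring
  · have htpos : 0 < u j t i := by
      rcases (hne t ⟨ht, le_refl t⟩).lt_or_gt with h | h
      · exfalso
        have : (0:ℝ) ∈ Set.Icc (u j t i) (u j 0 i) := ⟨h.le, hpos.le⟩
        obtain ⟨s, hs, hs0⟩ := intermediate_value_Icc' ht hct this
        exact hne s hs hs0
      · exact h
    rw [Real.sqrt_sq htpos.le, Real.sign_of_pos hpos]
    ring
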